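/- Let λ, μ ∈ (0,∞) and t > 0, and write p01 = p01(t), p11 = p11(t). For every z ∈ [0,1] and every x ∈ (0,1), the function v ↦ v·x − J_{t,v}(z) attains its supremum over ℝ at a unique point v* ∈ ℝ, and v* is the unique real solution of the stationarity equation x = z · p11·e^{v*}/(1 − p11 + e^{v*}·p11) + (1 − z) · p01·e^{v*}/(1 − p01 + e^{v*}·p01). In particular I_{1,t}(z,x) = v*·x − J_{t,v*}(z). -/

import Mathlib

noncomputable section

open MeasureTheory Real Filter

/-- Probability that an initially inactive edge is active at time `t`. -/
def p01 (lam mu t : ℝ) : ℝ := (lam - lam * Real.exp (-(t * (lam + mu)))) / (lam + mu)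

/-- Probability that an initially active edge is active at time `t`. -/
def p11 (lam mu t : ℝ) : ℝ := (lam + mu * Real.exp (-(t * (lam + mu)))) / (lam + mu)

/-- The cumulant-type function `J_{t,v}(u)`. -/
def Jfun (lam mu t v u : ℝ) : ℝ :=
  u * Real.log (1 - p11 lam mu t + Real.exp v * p11 lam mu t) +
  (1 - u) * Real.log (1 - p01 lam mu t + Real.exp v * p01 lam mu t)

/-- The one-step rate function `I_{1,t}(u,x) = sup_v [v x - J_{t,v}(u)]`. -/
def I1 (lam mu t u x : ℝ) : ℝ := ⨆ v : ℝ, (v * x - Jfun lam mu t v u)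

/-- The mean of the tilted edge distribution at tilt `v`. -/
def tiltedMean (lam mu t z v : ℝ) : ℝ :=
  z * (p11 lam mu t * Real.exp v / (1 - p11 lam mu t + Real.exp v * p11 lam mu t)) +
  (1 - z) * (p01 lam mu t * Real.exp v / (1 - p01 lam mu t + Real.exp v * p01 lam mu t))

section Aux
variable {p : ℝ}

lemma den_pos (hp : p ∈ Set.Ioo (0:ℝ) 1) (v : ℝ) :
    0 < 1 - p + Real.exp v * p := by
  have h := Real.exp_pos v
  nlinarith [hp.1, hp.2]

lemma g_strictMono (hp : p ∈ Set.Ioo (0:ℝ) 1) :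
    StrictMono (fun v => p * Real.exp v / (1 - p + Real.exp v * p)) := by
  intro v w hvw
  have hdv := den_pos hp v
  have hdw := den_pos hp w
  have hew : Real.exp v < Real.exp w := Real.exp_lt_exp.mpr hvw
  rw [div_lt_div_iff₀ hdv hdw]
  nlinarith [hp.1, hp.2, mul_pos (mul_pos hp.1 (sub_pos.mpr hp.2)) (sub_pos.mpr hew)]

lemma g_tendsto_atBot (hp : p ∈ Set.Ioo (0:ℝ) 1) :
    Tendsto (fun v => p * Real.exp v / (1 - p + Real.exp v * p)) atBot (nhds 0) := by
  have h1 : Tendsto (fun v => p * Real.exp v) atBot (nhds (p * 0)) :=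
    tendsto_const_nhds.mul Real.tendsto_exp_atBot
  have h2 : Tendsto (fun v => 1 - p + Real.exp v * p) atBot (nhds (1 - p + 0 * p)) :=
    tendsto_const_nhds.add (Real.tendsto_exp_atBot.mul tendsto_const_nhds)
  have hne : (1 : ℝ) - p + 0 * p ≠ 0 := by nlinarith [hp.2]
  simpa [Pi.div_def] using h1.div h2 hne

lemma g_eq (v : ℝ) :
    p * Real.exp v / (1 - p + Real.exp v * p) = p / ((1 - p) * Real.exp (-v) + p) := by
  rw [Real.exp_neg]
  have h := (Real.exp_pos v).ne'
  field_simp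

lemma g_tendsto_atTop (hp : p ∈ Set.Ioo (0:ℝ) 1) :
    Tendsto (fun v => p * Real.exp v / (1 - p + Real.exp v * p)) atTop (nhds 1) := by
  have hexp : Tendsto (fun v : ℝ => Real.exp (-v)) atTop (nhds 0) :=
    Real.tendsto_exp_atBot.comp tendsto_neg_atTop_atBot
  have h2 : Tendsto (fun v => (1 - p) * Real.exp (-v) + p) atTop (nhds ((1 - p) * 0 + p)) :=
    (tendsto_const_nhds.mul hexp).add tendsto_const_nhds
  have hne : (1 - p) * 0 + p ≠ 0 := by simpa using hp.1.ne'
  have h3 : Tendsto (fun v => p / ((1 - p) * Real.exp (-v) + p)) atTop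
      (nhds (p / ((1 - p) * 0 + p))) := Tendsto.div tendsto_const_nhds h2 hne
  have hp1 : p / ((1 - p) * 0 + p) = 1 := by
    rw [mul_zero, zero_add, div_self hp.1.ne']
  rw [hp1] at h3
  simpa [g_eq] using h3

lemma hasDeriv_logden (hp : p ∈ Set.Ioo (0:ℝ) 1) (v : ℝ) :
    HasDerivAt (fun v => Real.log (1 - p + Real.exp v * p))
      (p * Real.exp v / (1 - p + Real.exp v * p)) v := by
  have h1 : HasDerivAt (fun v => 1 - p + Real.exp v * p) (Real.exp v * p) v :=
    ((Real.hasDerivAt_exp v).mul_const p).const_add (1 - p)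
  have h2 := h1.log (den_pos hp v).ne'
  simpa [mul_comm] using h2

end Aux

/-- Existence, uniqueness and characterisation of the optimal tilt in the Legendre transform. -/
theorem stmt_6 (lam mu t : ℝ) (hlam : 0 < lam) (hmu : 0 < mu) (ht : 0 < t)
    (z x : ℝ) (hz : z ∈ Set.Icc (0:ℝ) 1) (hx : x ∈ Set.Ioo (0:ℝ) 1) :
    ∃ vstar : ℝ,
      (∀ v : ℝ, v * x - Jfun lam mu t v z ≤ vstar * x - Jfun lam mu t vstar z) ∧
      (∀ v : ℝ, (∀ w : ℝ, w * x - Jfun lam mu t w z ≤ v * x - Jfun lam mu t v z) → v = vstar) ∧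
      x = tiltedMean lam mu t z vstar ∧
      (∀ v : ℝ, x = tiltedMean lam mu t z v → v = vstar) ∧
      I1 lam mu t z x = vstar * x - Jfun lam mu t vstar z := by
  -- basic bounds on p01 and p11
  have hlm : 0 < lam + mu := by linarith
  have hE0 : 0 < Real.exp (-(t * (lam + mu))) := Real.exp_pos _
  have hE1 : Real.exp (-(t * (lam + mu))) < 1 := by
    apply Real.exp_lt_one_iff.mpr
    nlinarith
  have ha : p11 lam mu t ∈ Set.Ioo (0:ℝ) 1 := by
    unfold p11
    constructor
    · apply div_pos _ hlm; nlinarith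
    · rw [div_lt_one hlm]; nlinarith
  have hb : p01 lam mu t ∈ Set.Ioo (0:ℝ) 1 := by
    unfold p01
    constructor
    · apply div_pos _ hlm; nlinarith
    · rw [div_lt_one hlm]; nlinarith
  set m : ℝ → ℝ := fun v => tiltedMean lam mu t z v with hm_def
  -- strict monotonicity of the tilted mean
  have hm_mono : StrictMono m := by
    intro v w hvw
    have h1a := g_strictMono ha hvw
    have h1b := g_strictMono hb hvw
    simp only [hm_def, tiltedMean]
    rcases eq_or_lt_of_le hz.1 with hz0 | hz0
    · rw [← hz0]; simpa using h1b
    · have h1z : 0 ≤ 1 - z := by linarith [hz.2]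
      exact add_lt_add_of_lt_of_le (mul_lt_mul_of_pos_left h1a hz0)
        (mul_le_mul_of_nonneg_left h1b.le h1z)
  -- limits of the tilted mean
  have hm_bot : Tendsto m atBot (nhds 0) := by
    have := (tendsto_const_nhds (x := z)).mul (g_tendsto_atBot ha) |>.add
      ((tendsto_const_nhds (x := 1 - z)).mul (g_tendsto_atBot hb))
    simpa [hm_def, tiltedMean] using this
  have hm_top : Tendsto m atTop (nhds 1) := by
    have := (tendsto_const_nhds (x := z)).mul (g_tendsto_atTop ha) |>.add
      ((tendsto_const_nhds (x := 1 - z)).mul (g_tendsto_atTop hb))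
    have h1 : z * 1 + (1 - z) * 1 = 1 := by ring
    rw [h1] at this
    simpa [hm_def, tiltedMean] using this
  -- continuity of the tilted mean
  have hm_cont : Continuous m := by
    simp only [hm_def, tiltedMean]
    apply Continuous.add
    · exact continuous_const.mul ((continuous_const.mul Real.continuous_exp).div
        (continuous_const.add (Real.continuous_exp.mul continuous_const))
        (fun v => (den_pos ha v).ne'))
    · exact continuous_const.mul ((continuous_const.mul Real.continuous_exp).div
        (continuous_const.add (Real.continuous_exp.mul continuous_const))
        (fun v => (den_pos hb v).ne'))
  -- find points where m is below and above x
  obtain ⟨v0, hv0⟩ : ∃ v0, m v0 < x := (hm_bot.eventually_lt_const hx.1).exists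
  obtain ⟨v1, hv1⟩ : ∃ v1, x < m v1 := (hm_top.eventually_const_lt hx.2).exists
  have hv01 : v0 ≤ v1 := by
    by_contra h
    push_neg at h
    exact absurd (hm_mono h) (by linarith)
  -- IVT
  obtain ⟨vstar, _, hvstar⟩ : ∃ v ∈ Set.Icc v0 v1, m v = x := by
    have := intermediate_value_Icc hv01 hm_cont.continuousOn
    have hxmem : x ∈ Set.Icc (m v0) (m v1) := ⟨hv0.le, hv1.le⟩
    obtain ⟨v, hv, hveq⟩ := this hxmem
    exact ⟨v, hv, hveq⟩
  -- derivative of the objective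
  set f : ℝ → ℝ := fun v => v * x - Jfun lam mu t v z with hf_def
  have hfd : ∀ v, HasDerivAt f (x - m v) v := by
    intro v
    have h1 := (hasDeriv_logden ha v).const_mul z
    have h2 := (hasDeriv_logden hb v).const_mul (1 - z)
    have h3 : HasDerivAt (fun v : ℝ => v * x) x v := by
      simpa using (hasDerivAt_id v).mul_const x
    have h4 := h3.sub (h1.add h2)
    have heq : x - m v = x - (z * (p11 lam mu t * Real.exp v /
        (1 - p11 lam mu t + Real.exp v * p11 lam mu t)) +
        (1 - z) * (p01 lam mu t * Real.exp v /
        (1 - p01 lam mu t + Real.exp v * p01 lam mu t))) := by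
      simp [hm_def, tiltedMean]
    rw [heq]
    exact h4
  have hfc : Continuous f := by
    rw [continuous_iff_continuousAt]
    exact fun v => (hfd v).continuousAt
  -- strict monotonicity / antitonicity around vstar
  have hmono : StrictMonoOn f (Set.Iic vstar) := by
    apply strictMonoOn_of_deriv_pos (convex_Iic _) hfc.continuousOn
    intro v hv
    rw [interior_Iic] at hv
    rw [(hfd v).deriv]
    have : m v < m vstar := hm_mono hv
    rw [hvstar] at this
    linarith
  have hanti : StrictAntiOn f (Set.Ici vstar) := by
    apply strictAntiOn_of_deriv_neg (convex_Ici _) hfc.continuousOn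
    intro v hv
    rw [interior_Ici] at hv
    rw [(hfd v).deriv]
    have : m vstar < m v := hm_mono hv
    rw [hvstar] at this
    linarith
  have hstrict : ∀ v, v ≠ vstar → f v < f vstar := by
    intro v hne
    rcases lt_or_gt_of_ne hne with h | h
    · exact hmono (Set.mem_Iic.mpr h.le) Set.self_mem_Iic h
    · exact hanti Set.self_mem_Ici (Set.mem_Ici.mpr h.le) h
  have hmax : ∀ v, f v ≤ f vstar := by
    intro v
    rcases eq_or_ne v vstar with rfl | hne
    · exact le_refl _
    · exact (hstrict v hne).le
  refine ⟨vstar, hmax, ?_, hvstar.symm, ?_, ?_⟩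
  · intro v hv
    by_contra hne
    exact absurd (hv vstar) (not_le.mpr (hstrict v hne))
  · intro v hveq
    apply hm_mono.injective
    show tiltedMean lam mu t z v = m vstar
    rw [← hveq, hvstar]
  · have hbdd : BddAbove (Set.range f) := ⟨f vstar, by rintro _ ⟨v, rfl⟩; exact hmax v⟩
    exact le_antisymm (ciSup_le hmax) (le_ciSup hbdd vstar)
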